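/- Let p be an odd prime, h ≥ 1, q = p^h, F an algebraically closed field of characteristic p, and K = F(m) the rational function field over F. Let t ∈ F with t^{q²} ≠ t. Then the polynomial g(T) = T^q + (m + t)·T^{q−1} + (m + t^q) is irreducible in K[T]. -/
import Mathlib

open Polynomial

noncomputable section AuxSwap

variable {R : Type*} [CommSemiring R]

/-- The variable-swap ring homomorphism on `R[X][Y]`. -/
def swapHom : Polynomial (Polynomial R) →+* Polynomial (Polynomial R) :=
  eval₂RingHom (mapRingHom Polynomial.C) (Polynomial.C Polynomial.X)

@[simp] lemma swapHom_X : swapHom (Polynomial.X : Polynomial (Polynomial R)) = Polynomial.C Polynomial.X := by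
  simp [swapHom]

@[simp] lemma swapHom_C (p : Polynomial R) :
    swapHom (Polynomial.C p : Polynomial (Polynomial R)) = p.map Polynomial.C := by
  simp [swapHom]

lemma swapHom_comp_swapHom :
    (swapHom : Polynomial (Polynomial R) →+* Polynomial (Polynomial R)).comp swapHom
      = RingHom.id _ := by
  apply Polynomial.ringHom_ext'
  · apply Polynomial.ringHom_ext'
    · ext r
      simp [Polynomial.map_C]
    · simp [Polynomial.map_X]
  · simp

/-- The variable-swap ring equivalence on `R[X][Y]`. -/
def swapEquiv : Polynomial (Polynomial R) ≃+* Polynomial (Polynomial R) :=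
  RingEquiv.ofRingHom swapHom swapHom swapHom_comp_swapHom swapHom_comp_swapHom

end AuxSwap

theorem stmt_11 (p h q : ℕ) [Fact p.Prime] (hodd : Odd p) (hh : 0 < h) (hq : q = p ^ h)
    (F : Type) [Field F] [IsAlgClosed F] [CharP F p] (t : F)
    (ht : t ^ (q ^ 2) ≠ t) :
    Irreducible
      ((X ^ q + C (RatFunc.X + RatFunc.C t) * X ^ (q - 1)
          + C (RatFunc.X + RatFunc.C (t ^ q))) : Polynomial (RatFunc F)) := by
  classical
  have hp : p.Prime := Fact.out
  have hp2 : 2 ≤ p := hp.two_le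
  have hq2 : 2 ≤ q := by
    rw [hq]
    calc 2 ≤ p := hp2
    _ = p ^ 1 := (pow_one p).symm
    _ ≤ p ^ h := Nat.pow_le_pow_right (by omega) hh
  have hq1 : q - 1 + 1 = q := by omega
  -- the polynomial over F[X][Y]
  set P : Polynomial (Polynomial F) :=
    X ^ q + C (X + C t) * X ^ (q - 1) + C (X + C (t ^ q)) with hP
  -- A and B in F[X]
  set A : Polynomial F := X ^ (q - 1) + 1 with hA
  set B : Polynomial F := X ^ q + C t * X ^ (q - 1) + C (t ^ q) with hB
  have hAne : A ≠ 0 := by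
    have : A.Monic := by
      rw [hA]
      apply monic_X_pow_add
      rw [Polynomial.degree_one]
      exact_mod_cast WithBot.coe_lt_coe.mpr (by omega : (0:ℕ) < q - 1)
    exact this.ne_zero
  -- no common root of A and B
  have hroot : ∀ u : F, A.eval u = 0 → B.eval u = 0 → False := by
    intro u hu1 hu2
    rw [hA] at hu1; rw [hB] at hu2
    simp only [eval_add, eval_pow, eval_X, eval_one, eval_mul, eval_C] at hu1 hu2
    have h1 : u ^ (q - 1) = -1 := by linear_combination hu1
    have h2 : u ^ q = -u := by
      calc u ^ q = u ^ (q - 1) * u := by rw [← pow_succ, hq1]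
      _ = -u := by rw [h1]; ring
    have h3 : u = t ^ q - t := by
      rw [h2, h1] at hu2; linear_combination -hu2
    have h4 : (t ^ q - t) ^ q = -(t ^ q - t) := by rw [← h3, ← h2, h3]
    rw [hq, sub_pow_char_pow] at h4
    have h5 : t ^ (q ^ 2) = (t ^ q) ^ q := by
      rw [sq, pow_mul]
    refine ht ?_
    rw [h5, hq]
    linear_combination h4
  have hcop : IsCoprime A B := by
    rw [← EuclideanDomain.gcd_isUnit_iff]
    by_contra hnu
    have hd0 : EuclideanDomain.gcd A B ≠ 0 := fun h0 =>
      hAne (by simpa [h0] using EuclideanDomain.gcd_dvd_left A B)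
    have hdeg : (EuclideanDomain.gcd A B).degree ≠ 0 := by
      intro hdeg
      exact hnu (Polynomial.isUnit_iff_degree_eq_zero.mpr hdeg)
    obtain ⟨u, hu⟩ := IsAlgClosed.exists_root _ hdeg
    have huA : A.eval u = 0 :=
      Polynomial.eval_eq_zero_of_dvd_of_eval_eq_zero (EuclideanDomain.gcd_dvd_left A B) hu
    have huB : B.eval u = 0 :=
      Polynomial.eval_eq_zero_of_dvd_of_eval_eq_zero (EuclideanDomain.gcd_dvd_right A B) hu
    exact hroot u huA huB
  -- the swapped polynomial
  have hswap : swapHom P = C A * X + C B := by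
    rw [hP, hA, hB]
    simp only [map_add, map_mul, map_pow, swapHom_X, swapHom_C, Polynomial.map_add,
      Polynomial.map_X, Polynomial.map_C, map_one, Polynomial.map_one, Polynomial.map_pow,
      Polynomial.map_mul]
    rw [← map_pow, ← map_pow]
    ring
  -- irreducibility of C A * X + C B over F[X]
  have hQprim : (C A * X + C B).IsPrimitive := by
    intro r hr
    rw [Polynomial.C_dvd_iff_dvd_coeff] at hr
    have hrA : r ∣ A := by have := hr 1; simpa using this
    have hrB : r ∣ B := by have := hr 0; simpa using this
    exact hcop.isUnit_of_dvd' hrA hrB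
  have hQirr : Irreducible (C A * X + C B) := by
    rw [hQprim.irreducible_iff_irreducible_map_fraction_map (K := RatFunc F)]
    apply Polynomial.irreducible_of_degree_eq_one
    rw [Polynomial.map_add, Polynomial.map_mul, Polynomial.map_C, Polynomial.map_C,
      Polynomial.map_X]
    exact Polynomial.degree_linear (by
      simpa using (map_ne_zero_iff _ (IsFractionRing.injective (Polynomial F) (RatFunc F))).mpr hAne)
  -- transfer back
  have hPirr : Irreducible P := by
    have : Irreducible (swapEquiv P) := by
      show Irreducible (swapHom P)
      rw [hswap]; exact hQirr
    exact (MulEquiv.irreducible_iff (swapEquiv : Polynomial (Polynomial F) ≃+* _)).mp this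
  -- P is monic, so primitive; use Gauss's lemma to RatFunc F
  have hPmonic : P.Monic := by
    rw [hP, add_assoc]
    apply monic_X_pow_add
    apply lt_of_le_of_lt (Polynomial.degree_add_le _ _)
    apply max_lt
    · apply lt_of_le_of_lt (Polynomial.degree_mul_le _ _)
      calc (C (X + C t)).degree + (X ^ (q-1) : Polynomial (Polynomial F)).degree
          ≤ 0 + (q - 1 : ℕ) := add_le_add Polynomial.degree_C_le (by rw [Polynomial.degree_X_pow])
        _ < (q : ℕ) := by
            rw [zero_add]
            exact_mod_cast WithBot.coe_lt_coe.mpr (by omega)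
    · apply lt_of_le_of_lt Polynomial.degree_C_le
      exact_mod_cast WithBot.coe_lt_coe.mpr (by omega : (0:ℕ) < q)
  have := (hPmonic.isPrimitive.irreducible_iff_irreducible_map_fraction_map (K := RatFunc F)).mp hPirr
  have hmap : P.map (algebraMap (Polynomial F) (RatFunc F)) =
      X ^ q + C (RatFunc.X + RatFunc.C t) * X ^ (q - 1) + C (RatFunc.X + RatFunc.C (t ^ q)) := by
    rw [hP]
    simp [Polynomial.map_add, Polynomial.map_mul, Polynomial.map_pow, Polynomial.map_X,
      Polynomial.map_C, map_add, RatFunc.algebraMap_X, RatFunc.algebraMap_C]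
  rwa [hmap] at this
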